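/- Let a and b be real numbers with a > 0 and b > 0. The point y = a / (a + b) is the unique maximizer on (0, 1) of f(y) = a * Real.log y + b * Real.log (1 - y): if y ∈ (0, 1) and y ≠ a / (a + b), then a * Real.log y + b * Real.log (1 - y) < a * Real.log (a / (a + b)) + b * Real.log (b / (a + b)). -/
import Mathlib


theorem gan_discriminator_pointwise_unique_max (a b : ℝ) (ha : 0 < a) (hb : 0 < b) :
    ∀ y : ℝ, 0 < y → y < 1 → y ≠ a / (a + b) →
      a * Real.log y + b * Real.log (1 - y) <
        a * Real.log (a / (a + b)) + b * Real.log (b / (a + b)) := by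
  intro y hy0 hy1 hne
  have hab : 0 < a + b := by linarith
  have h1y : 0 < 1 - y := by linarith
  set u := y * (a + b) / a with hu
  set v := (1 - y) * (a + b) / b with hv
  have hu0 : 0 < u := by positivity
  have hv0 : 0 < v := by positivity
  have hune : u ≠ 1 := by
    intro h
    apply hne
    rw [hu] at h
    field_simp at h ⊢
    linarith
  have h1 : Real.log u < u - 1 := Real.log_lt_sub_one_of_pos hu0 hune
  have h2 : Real.log v ≤ v - 1 := Real.log_le_sub_one_of_pos hv0
  have hlu : Real.log u = Real.log y - Real.log (a / (a + b)) := by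
    rw [hu, Real.log_div (by positivity) ha.ne', Real.log_mul hy0.ne' hab.ne',
      Real.log_div ha.ne' hab.ne']
    ring
  have hlv : Real.log v = Real.log (1 - y) - Real.log (b / (a + b)) := by
    rw [hv, Real.log_div (by positivity) hb.ne', Real.log_mul h1y.ne' hab.ne',
      Real.log_div hb.ne' hab.ne']
    ring
  have hau : a * u = y * (a + b) := by rw [hu]; field_simp
  have hbv : b * v = (1 - y) * (a + b) := by rw [hv]; field_simp
  nlinarith [mul_lt_mul_of_pos_left h1 ha, mul_le_mul_of_nonneg_left h2 hb.le,
    mul_lt_mul_of_pos_left (show Real.log u < u - 1 from h1) ha]
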